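/- Let Δ and Δ' be two regular k-simplices in R^k with unit edge length sharing a common (k−1)-dimensional face F (with their apexes on opposite sides of the hyperplane containing F). Then the distance between the two apexes is strictly greater than 1. -/

import Mathlib

open Finset in
lemma aux_far {k : ℕ} (v : Fin k → EuclideanSpace ℝ (Fin k))
    (x : EuclideanSpace ℝ (Fin k))
    (hreg : ∀ i j, i ≠ j → dist (v i) (v j) = 1)
    (hx : ∀ i, dist x (v i) = 1)
    (w : Fin k → ℝ) (hw : ∑ i, w i = 1) :
    1 / 2 < dist x (Finset.univ.affineCombination ℝ v w) := by
  have hcomb : Finset.univ.affineCombination ℝ v w = ∑ i, w i • v i :=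
    Finset.univ.affineCombination_eq_linear_combination v w hw
  have hdiff : x - Finset.univ.affineCombination ℝ v w = ∑ i, w i • (x - v i) := by
    rw [hcomb]
    have : x = ∑ i, w i • x := by rw [← Finset.sum_smul, hw, one_smul]
    simp_rw [smul_sub, Finset.sum_sub_distrib]
    rw [← this]
  have hinner : ∀ i j, inner ℝ (x - v i) (x - v j) = if i = j then 1 else 1 / 2 := by
    intro i j
    by_cases h : i = j
    · subst h
      simp only [if_pos rfl, real_inner_self_eq_norm_sq]
      have := hx i
      rw [dist_eq_norm] at this
      rw [this]; norm_num
    · simp only [if_neg h]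
      have h1 : ‖x - v i‖ = 1 := by rw [← dist_eq_norm]; exact hx i
      have h2 : ‖x - v j‖ = 1 := by rw [← dist_eq_norm]; exact hx j
      have h3 : ‖(x - v i) - (x - v j)‖ = 1 := by
        have : (x - v i) - (x - v j) = v j - v i := by abel
        rw [this, ← dist_eq_norm]
        exact hreg j i (Ne.symm h)
      have := norm_sub_sq_real (x - v i) (x - v j)
      rw [h1, h2, h3] at this
      nlinarith
  have hnormsq : ‖x - Finset.univ.affineCombination ℝ v w‖ ^ 2
      = 1 / 2 + (∑ i, (w i) ^ 2) / 2 := by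
    rw [← real_inner_self_eq_norm_sq, hdiff, inner_sum]
    simp_rw [sum_inner, real_inner_smul_left, real_inner_smul_right, hinner]
    have : ∀ j ∈ Finset.univ, ∑ i : Fin k, w i * (w j * if i = j then 1 else 1 / 2)
        = (w j) ^ 2 / 2 + w j / 2 := by
      intro j _
      have : ∑ i : Fin k, w i * (w j * if i = j then 1 else 1 / 2)
          = ∑ i : Fin k, (w i * w j / 2 + if i = j then w i * w j / 2 else 0) := by
        apply Finset.sum_congr rfl
        intro i _
        by_cases h : i = j <;> simp [h] <;> ring
      rw [this, Finset.sum_add_distrib, Finset.sum_ite_eq' Finset.univ j (fun i => w i * w j / 2)]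
      simp only [Finset.mem_univ, if_pos]
      rw [← Finset.sum_div, ← Finset.sum_mul, hw]
      ring
    rw [Finset.sum_congr rfl this, Finset.sum_add_distrib]
    have h1 : ∑ j : Fin k, (w j) ^ 2 / 2 = (∑ j, (w j) ^ 2) / 2 := by rw [Finset.sum_div]
    have h2 : ∑ j : Fin k, w j / 2 = 1 / 2 := by rw [← Finset.sum_div, hw]
    rw [h1, h2]; ring
  have hsq : (1 / 2 : ℝ) ^ 2 < ‖x - Finset.univ.affineCombination ℝ v w‖ ^ 2 := by
    rw [hnormsq]
    have : (0:ℝ) ≤ ∑ i, (w i) ^ 2 := Finset.sum_nonneg fun i _ => sq_nonneg _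
    nlinarith
  rw [dist_eq_norm]
  exact lt_of_pow_lt_pow_left₀ 2 (norm_nonneg _) hsq

theorem stmt_16 {k : ℕ} (hk : 1 ≤ k) (v : Fin k → EuclideanSpace ℝ (Fin k))
    (a b : EuclideanSpace ℝ (Fin k))
    (hreg : ∀ i j, i ≠ j → dist (v i) (v j) = 1)
    (ha : ∀ i, dist a (v i) = 1) (hb : ∀ i, dist b (v i) = 1)
    (hopp : (affineSpan ℝ (Set.range v)).SOppSide a b) :
    1 < dist a b := by
  obtain ⟨p, hp, hsbtw⟩ := hopp.exists_sbtw
  obtain ⟨w, hw, rfl⟩ := eq_affineCombination_of_mem_affineSpan_of_fintype hp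
  have h1 := aux_far v a hreg ha w hw
  have h2 := aux_far v b hreg hb w hw
  have hdd := hsbtw.wbtw.dist_add_dist
  rw [dist_comm] at h2
  linarith
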